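/- Let K be a field of characteristic p > 3, L a Lie algebra over K with [[L,L],L] ≠ 0 (L is not 2-step nilpotent), A a commutative unital K-algebra, φ : L × L → L an alternating bilinear map, and u ∈ A. Then the alternating bilinear map Θ on L ⊗ A defined by Θ(x⊗a, y⊗b) = φ(x,y) ⊗ abu is a 2-cocycle of L ⊗ A with coefficients in the adjoint module if and only if either φ is a 2-cocycle of L with coefficients in the adjoint module, or u = 0. -/

import Mathlib

/-!
STATEMENT 3: char K = p > 3, L a Lie algebra with [[L,L],L] ≠ 0, A a commutative
unital K-algebra, φ an alternating bilinear map on L, u ∈ A.  The map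
Θ(x⊗a, y⊗b) = φ(x,y) ⊗ abu is a 2-cocycle of L ⊗ A (adjoint coefficients) iff
φ is a 2-cocycle of L or u = 0.  (L ⊗ A is realized as A ⊗[K] L.)
-/


open scoped TensorProduct

section Helpers

variable (K : Type) [Field K]

/-- Combine a bilinear map on `A` and a bilinear map on `L` into a bilinear map on
`A ⊗[K] L`, sending `(a ⊗ x, b ⊗ y)` to `f a b ⊗ g x y`. -/
noncomputable def tensorBilin
    (A : Type) [AddCommGroup A] [Module K A]
    (L : Type) [AddCommGroup L] [Module K L]
    (M : Type) [AddCommGroup M] [Module K M]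
    (N : Type) [AddCommGroup N] [Module K N]
    (f : A →ₗ[K] A →ₗ[K] M) (g : L →ₗ[K] L →ₗ[K] N) :
    (A ⊗[K] L) →ₗ[K] (A ⊗[K] L) →ₗ[K] (M ⊗[K] N) :=
  TensorProduct.curry
    ((TensorProduct.map (TensorProduct.lift f) (TensorProduct.lift g)).comp
      (TensorProduct.tensorTensorTensorComm K A L A L).toLinearMap)

@[simp] theorem tensorBilin_tmul
    (A : Type) [AddCommGroup A] [Module K A]
    (L : Type) [AddCommGroup L] [Module K L]
    (M : Type) [AddCommGroup M] [Module K M]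
    (N : Type) [AddCommGroup N] [Module K N]
    (f : A →ₗ[K] A →ₗ[K] M) (g : L →ₗ[K] L →ₗ[K] N)
    (a b : A) (x y : L) :
    tensorBilin K A L M N f g (a ⊗ₜ x) (b ⊗ₜ y) = f a b ⊗ₜ g x y := rfl

/-- The Chevalley–Eilenberg 2-cocycle condition, with coefficients in the adjoint
module, for an (alternating) bilinear map `φ` on a Lie algebra `L`. -/
def IsLie2Cocycle (L : Type) [LieRing L] [Module K L]
    (φ : L →ₗ[K] L →ₗ[K] L) : Prop :=
  ∀ x y z : L,
    ⁅x, φ y z⁆ - ⁅y, φ x z⁆ + ⁅z, φ x y⁆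
      - φ ⁅x, y⁆ z + φ ⁅x, z⁆ y - φ ⁅y, z⁆ x = 0

/-- The Harrison 2-cocycle condition (symmetry plus the Hochschild cocycle identity)
for a bilinear map `F` on a commutative `K`-algebra `A`. -/
def IsHarrison2Cocycle (A : Type) [CommRing A] [Algebra K A]
    (F : A →ₗ[K] A →ₗ[K] A) : Prop :=
  (∀ a b : A, F a b = F b a) ∧
    ∀ a b c : A, a * F b c - F (a * b) c + F a (b * c) - F a b * c = 0

end Helpers

/-- The bilinear map `(a, b) ↦ a * b * u` on `A`. -/
noncomputable def mulMulBy (K : Type) [Field K] (A : Type) [CommRing A] [Algebra K A]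
    (u : A) : A →ₗ[K] A →ₗ[K] A :=
  LinearMap.mk₂ K (fun a b => a * b * u)
    (by intros; ring) (by intros; simp [smul_mul_assoc])
    (by intros; ring) (by intros m n c; rw [mul_smul_comm, smul_mul_assoc])

theorem statement3
    (K : Type) [Field K] (p : ℕ) [CharP K p] (hp : 3 < p)
    (L : Type) [LieRing L] [LieAlgebra K L]
    (A : Type) [CommRing A] [Algebra K A]
    (hL : ¬ ∀ x y z : L, ⁅⁅x, y⁆, z⁆ = 0)
    (φ : L →ₗ[K] L →ₗ[K] L) (hφ : ∀ x : L, φ x x = 0) (u : A) :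
    IsLie2Cocycle K (A ⊗[K] L) (tensorBilin K A L A L (mulMulBy K A u) φ) ↔
      (IsLie2Cocycle K L φ ∨ u = 0) := by
  constructor
  · intro h
    by_cases hu : u = 0
    · exact Or.inr hu
    · left
      intro x y z
      have hc := h ((1:A) ⊗ₜ[K] x) ((1:A) ⊗ₜ[K] y) ((1:A) ⊗ₜ[K] z)
      simp only [tensorBilin_tmul, mulMulBy, LinearMap.mk₂_apply,
        LieAlgebra.ExtendScalars.bracket_tmul, one_mul, mul_one] at hc
      simp only [← TensorProduct.tmul_sub, ← TensorProduct.tmul_add] at hc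
      obtain ⟨f, hf⟩ : ∃ f : Module.Dual K A, f u ≠ 0 := by
        by_contra hcon
        push_neg at hcon
        exact hu ((Module.forall_dual_apply_eq_zero_iff K u).mp hcon)
      have h2 := congrArg ((TensorProduct.lid K L).toLinearMap ∘ₗ LinearMap.rTensor L f) hc
      simp only [LinearMap.comp_apply, LinearMap.rTensor_tmul, map_zero,
        TensorProduct.lid_tmul] at h2
      rcases smul_eq_zero.mp h2 with h3 | h3
      · exact absurd h3 hf
      · exact h3
  · intro h X Y Z
    induction X using TensorProduct.induction_on with
    | zero => simp
    | tmul a x =>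
      induction Y using TensorProduct.induction_on with
      | zero => simp
      | tmul b y =>
        induction Z using TensorProduct.induction_on with
        | zero => simp
        | tmul c z =>
          simp only [tensorBilin_tmul, mulMulBy, LinearMap.mk₂_apply,
            LieAlgebra.ExtendScalars.bracket_tmul]
          rw [show a*(b*c*u) = a*b*c*u by ring, show b*(a*c*u) = a*b*c*u by ring,
            show c*(a*b*u) = a*b*c*u by ring, show a*c*b*u = a*b*c*u by ring,
            show b*c*a*u = a*b*c*u by ring]
          simp only [← TensorProduct.tmul_sub, ← TensorProduct.tmul_add]
          rcases h with hphi | rfl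
          · rw [hphi x y z, TensorProduct.tmul_zero]
          · simp
        | add Z1 Z2 h1 h2 =>
          simp only [map_add, LinearMap.add_apply, add_lie, lie_add]
          have h12 := congrArg₂ (· + ·) h1 h2
          simp only [add_zero] at h12
          rw [← h12]
          abel
      | add Y1 Y2 h1 h2 =>
        simp only [map_add, LinearMap.add_apply, add_lie, lie_add]
        have h12 := congrArg₂ (· + ·) h1 h2
        simp only [add_zero] at h12
        rw [← h12]
        abel
    | add X1 X2 h1 h2 =>
      simp only [map_add, LinearMap.add_apply, add_lie, lie_add]
      have h12 := congrArg₂ (· + ·) h1 h2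
      simp only [add_zero] at h12
      rw [← h12]
      abel
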